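/- Let N : ℕ → ℤ² → ℝ satisfy the 2D discrete total-population recursion. If N_{j,ℓ}^0 ≤ Λ/μ for all (j,ℓ) ∈ ℤ², then N_{j,ℓ}^n ≤ Λ/μ for all n ≥ 0 and all (j,ℓ) ∈ ℤ²; i.e., the region {N ≤ Λ/μ} is invariant under the 2D NSFD scheme, unconditionally in the step sizes k > 0 and h > 0. -/

import Mathlib

/-- The region `{N ≤ Λ/μ}` is invariant under the 2D discrete
total-population recursion, unconditionally in the step sizes `k > 0` and `h > 0`. -/
theorem nsfd2d_total_population_invariant_region
    (Λ μ lam k φ h r : ℝ)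
    (hΛ : 0 ≤ Λ) (hμ : 0 < μ) (hlam : 0 ≤ lam)
    (hk : 0 < k) (hφ : 0 < φ) (hh : 0 < h) (hr : r = φ / h ^ 2)
    (N : ℕ → ℤ → ℤ → ℝ)
    (hN : ∀ n j l, (N (n + 1) j l - N n j l) / φ =
      lam * (N n (j + 1) l + N n (j - 1) l + N n j (l + 1) + N n j (l - 1)
          - 4 * N (n + 1) j l) / h ^ 2 + Λ - μ * N (n + 1) j l)
    (hN0 : ∀ j l, N 0 j l ≤ Λ / μ) :
    ∀ n j l, N n j l ≤ Λ / μ := by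
  intro n
  induction n with
  | zero => exact hN0
  | succ n ih =>
    intro j l
    have h2 : (0:ℝ) < h ^ 2 := by positivity
    have key := hN n j l
    have hc : (1 + 4 * lam * (φ / h ^ 2) + φ * μ) * N (n + 1) j l =
        N n j l + lam * (φ / h ^ 2) *
          (N n (j + 1) l + N n (j - 1) l + N n j (l + 1) + N n j (l - 1)) + φ * Λ := by
      field_simp at key ⊢
      nlinarith [key]
    have hrpos : 0 ≤ lam * (φ / h ^ 2) := by positivity
    have hden : (0:ℝ) < 1 + 4 * lam * (φ / h ^ 2) + φ * μ := by positivity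
    have hΛμ : φ * Λ = φ * μ * (Λ / μ) := by field_simp
    have b1 := ih j l
    have b2 := ih (j + 1) l
    have b3 := ih (j - 1) l
    have b4 := ih j (l + 1)
    have b5 := ih j (l - 1)
    have : (1 + 4 * lam * (φ / h ^ 2) + φ * μ) * N (n + 1) j l ≤
        (1 + 4 * lam * (φ / h ^ 2) + φ * μ) * (Λ / μ) := by
      rw [hc]
      nlinarith [mul_le_mul_of_nonneg_left b2 hrpos, mul_le_mul_of_nonneg_left b3 hrpos,
        mul_le_mul_of_nonneg_left b4 hrpos, mul_le_mul_of_nonneg_left b5 hrpos]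
    exact le_of_mul_le_mul_left this hden
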